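/- Suppose (λ*, v*) is an eigenpair with ‖v*‖₂ = 1, σ ≠ λ*, and J(v*) − σI is invertible. Then ψ(v*) = (λ* − σ)⁻¹ v*, and consequently 1/‖ψ(v*)‖₂ = |λ* − σ|. -/

import Mathlib

open Matrix Asymptotics Topology
open scoped RealInnerProductSpace

noncomputable def mvCLM {ι : Type*} [Fintype ι] [DecidableEq ι] (M : Matrix ι ι ℝ) :
    EuclideanSpace ℝ ι →L[ℝ] EuclideanSpace ℝ ι :=
  LinearMap.toContinuousLinearMap (Matrix.toEuclideanLin M)

noncomputable def invitPsi {n : ℕ} (J : EuclideanSpace ℝ (Fin n) → Matrix (Fin n) (Fin n) ℝ)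
    (σ : ℝ) (v : EuclideanSpace ℝ (Fin n)) : EuclideanSpace ℝ (Fin n) :=
  mvCLM ((J v - σ • 1)⁻¹) v

noncomputable def invitPhi {n : ℕ} (J : EuclideanSpace ℝ (Fin n) → Matrix (Fin n) (Fin n) ℝ)
    (σ : ℝ) (v : EuclideanSpace ℝ (Fin n)) : EuclideanSpace ℝ (Fin n) :=
  ‖invitPsi J σ v‖⁻¹ • invitPsi J σ v

noncomputable def rayQuot {n : ℕ} (A : EuclideanSpace ℝ (Fin n) → Matrix (Fin n) (Fin n) ℝ)
    (v : EuclideanSpace ℝ (Fin n)) : ℝ :=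
  ⟪v, mvCLM (A v) v⟫ / ⟪v, v⟫

lemma mvCLM_apply {ι : Type*} [Fintype ι] [DecidableEq ι] (M : Matrix ι ι ℝ)
    (v : EuclideanSpace ℝ ι) : mvCLM M v = M.mulVec v := by
  simp [mvCLM]

lemma mvCLM_mul {ι : Type*} [Fintype ι] [DecidableEq ι] (M N : Matrix ι ι ℝ)
    (v : EuclideanSpace ℝ ι) : mvCLM (M * N) v = mvCLM M (mvCLM N v) := by
  ext i
  simp [mvCLM_apply, Matrix.mulVec_mulVec]

lemma mvCLM_one {ι : Type*} [Fintype ι] [DecidableEq ι] (v : EuclideanSpace ℝ ι) :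
    mvCLM (1 : Matrix ι ι ℝ) v = v := by
  ext i
  simp [mvCLM_apply]

lemma mvCLM_sub {ι : Type*} [Fintype ι] [DecidableEq ι] (M N : Matrix ι ι ℝ)
    (v : EuclideanSpace ℝ ι) : mvCLM (M - N) v = mvCLM M v - mvCLM N v := by
  simp [mvCLM]

lemma mvCLM_smul {ι : Type*} [Fintype ι] [DecidableEq ι] (c : ℝ) (M : Matrix ι ι ℝ)
    (v : EuclideanSpace ℝ ι) : mvCLM (c • M) v = c • mvCLM M v := by
  simp [mvCLM]

/-- If `(λ*, v*)` is an eigenpair with `‖v*‖ = 1`, `σ ≠ λ*`, and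
`J(v*) − σI` is invertible, then `ψ(v*) = (λ* − σ)⁻¹ v*` and `1/‖ψ(v*)‖ = |λ* − σ|`. -/
theorem stmt3 {n : ℕ} (hn : 1 ≤ n)
    (A J : EuclideanSpace ℝ (Fin n) → Matrix (Fin n) (Fin n) ℝ)
    (hsymm : ∀ v : EuclideanSpace ℝ (Fin n), v ≠ 0 → (A v).IsSymm)
    (hsmooth : ContDiffOn ℝ 1 (fun w i j => A w i j) {(0 : EuclideanSpace ℝ (Fin n))}ᶜ)
    (hscale : ∀ α : ℝ, α ≠ 0 → ∀ v : EuclideanSpace ℝ (Fin n), v ≠ 0 → A (α • v) = A v)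
    (hJ : ∀ v : EuclideanSpace ℝ (Fin n), v ≠ 0 →
      HasFDerivAt (fun w => mvCLM (A w) w) (mvCLM (J v)) v)
    (lam σ : ℝ) (vstar : EuclideanSpace ℝ (Fin n)) (hnorm : ‖vstar‖ = 1)
    (heig : mvCLM (A vstar) vstar = lam • vstar) (hσ : σ ≠ lam)
    (hinv : IsUnit (J vstar - σ • (1 : Matrix (Fin n) (Fin n) ℝ))) :
    invitPsi J σ vstar = (lam - σ)⁻¹ • vstar ∧ ‖invitPsi J σ vstar‖⁻¹ = |lam - σ| := by
  have hv : vstar ≠ 0 := by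
    intro h; rw [h, norm_zero] at hnorm; norm_num at hnorm
  -- Euler identity: J(v*) v* = lam v*
  have hc : HasDerivAt (fun t : ℝ => t • vstar) vstar 1 := by
    simpa using (hasDerivAt_id (1 : ℝ)).smul_const vstar
  have hcomp : HasDerivAt (fun t : ℝ => mvCLM (A (t • vstar)) (t • vstar))
      (mvCLM (J vstar) vstar) 1 := by
    have hJ1 : HasFDerivAt (fun w => mvCLM (A w) w) (mvCLM (J vstar))
        ((fun t : ℝ => t • vstar) 1) := by simpa using hJ vstar hv
    exact hJ1.comp_hasDerivAt 1 hc
  have hlin : HasDerivAt (fun t : ℝ => t • (lam • vstar)) (lam • vstar) 1 := by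
    simpa using (hasDerivAt_id (1 : ℝ)).smul_const (lam • vstar)
  have heq : (fun t : ℝ => mvCLM (A (t • vstar)) (t • vstar)) =ᶠ[nhds 1]
      (fun t : ℝ => t • (lam • vstar)) := by
    have h0 : ∀ᶠ t : ℝ in nhds 1, t ≠ 0 := eventually_ne_nhds (by norm_num)
    filter_upwards [h0] with t ht
    rw [hscale t ht vstar hv, (mvCLM (A vstar)).map_smul, heig]
  have hEuler : mvCLM (J vstar) vstar = lam • vstar :=
    (hcomp.congr_of_eventuallyEq heq.symm).unique hlin
  -- key vector identity
  set M : Matrix (Fin n) (Fin n) ℝ := J vstar - σ • 1 with hM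
  have hMv : mvCLM M vstar = (lam - σ) • vstar := by
    rw [hM, mvCLM_sub, hEuler, mvCLM_smul, mvCLM_one, sub_smul]
  have hdet : IsUnit M.det := (Matrix.isUnit_iff_isUnit_det M).mp hinv
  have hMinvM : M⁻¹ * M = 1 := Matrix.nonsing_inv_mul M hdet
  have hls : lam - σ ≠ 0 := sub_ne_zero.mpr (Ne.symm hσ)
  have key : vstar = (lam - σ) • mvCLM M⁻¹ vstar := by
    calc vstar = mvCLM (M⁻¹ * M) vstar := by rw [hMinvM, mvCLM_one]
    _ = mvCLM M⁻¹ (mvCLM M vstar) := mvCLM_mul _ _ _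
    _ = (lam - σ) • mvCLM M⁻¹ vstar := by rw [hMv, (mvCLM M⁻¹).map_smul]
  have hpsi : invitPsi J σ vstar = (lam - σ)⁻¹ • vstar := by
    have h2 : (lam - σ)⁻¹ • vstar = mvCLM M⁻¹ vstar := by
      conv_lhs => rw [key]
      rw [smul_smul, inv_mul_cancel₀ hls, one_smul]
    rw [invitPsi, ← hM, ← h2]
  refine ⟨hpsi, ?_⟩
  rw [hpsi, norm_smul, hnorm, mul_one, Real.norm_eq_abs, abs_inv, inv_inv]
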